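/- Let A be an AW*-algebra (a C*-algebra whose center is an AW*-algebra suffices), and let v be a unitary in A with v^n central for some n ≥ 1. Then there exists a self-adjoint element t in the center Z(A) such that v^n = e^{it}, and the unitary u = e^{-it/n} v satisfies u^n = 1 and Ad(u) = Ad(v). -/

import Mathlib

open NormedSpace

/-- Let `A` be a unital C*-algebra whose center has the AW*-property that every
central unitary admits a self-adjoint central logarithm (Sakai's lemma, valid in any
AW*-algebra).  If `v` is a unitary with `v ^ n` central for some `n ≥ 1`, then there is a
self-adjoint `t` in the center with `v ^ n = e^{it}`, and the unitary
`u = e^{-it/n} * v` satisfies `u ^ n = 1` and `Ad u = Ad v`. -/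
theorem stmt3 {A : Type*} [CStarAlgebra A]
    (hlog : ∀ w : A, w ∈ Set.center A → w ∈ unitary A →
      ∃ t : A, t ∈ Set.center A ∧ IsSelfAdjoint t ∧ w = exp (Complex.I • t))
    (v : A) (hv : v ∈ unitary A) (n : ℕ) (hn : 1 ≤ n) (hvn : v ^ n ∈ Set.center A) :
    ∃ t : A, t ∈ Set.center A ∧ IsSelfAdjoint t ∧ v ^ n = exp (Complex.I • t) ∧
      (exp ((-(Complex.I / (n : ℂ))) • t) * v) ^ n = 1 ∧
      ∀ x : A,
        (exp ((-(Complex.I / (n : ℂ))) • t) * v) * x *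
            star (exp ((-(Complex.I / (n : ℂ))) • t) * v) = v * x * star v := by
  letI : NormedAlgebra ℚ A := NormedAlgebra.restrictScalars ℚ ℂ A
  have hvnU : v ^ n ∈ unitary A := pow_mem hv n
  obtain ⟨t, htc, hts, htexp⟩ := hlog (v ^ n) hvn hvnU
  set c : ℂ := -(Complex.I / (n : ℂ)) with hc
  have hn0 : (n : ℂ) ≠ 0 := Nat.cast_ne_zero.mpr (by omega)
  -- t commutes with everything
  have htcomm : ∀ x : A, Commute t x := fun x => (Set.mem_center_iff.mp htc).comm x
  have hecomm : ∀ x : A, Commute (exp (c • t)) x := fun x =>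
    (((htcomm x).smul_left c).exp_left)
  -- star of exp
  have hstar : star (exp (c • t)) = exp ((-c) • t) := by
    have hcc : star c = -c := by
      simp only [hc, star_neg, star_div₀, Complex.star_def, Complex.conj_I,
        Complex.conj_natCast]
      ring
    rw [star_exp, star_smul, hts.star_eq, hcc]
  have hsmulcomm : ∀ a b : ℂ, Commute (a • t) (b • t) := fun a b =>
    ((Commute.refl t).smul_left a).smul_right b
  have hmulexp : ∀ a b : ℂ, exp (a • t) * exp (b • t) = exp ((a + b) • t) := by
    intro a b
    rw [← exp_add_of_commute (hsmulcomm a b), add_smul]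
  refine ⟨t, htc, hts, htexp, ?_, ?_⟩
  · have hpow : (exp (c • t)) ^ n = exp (((n : ℂ) * c) • t) := by
      rw [← exp_nsmul, ← Nat.cast_smul_eq_nsmul ℂ n (c • t), smul_smul]
    have hnc : (n : ℂ) * c = -Complex.I := by
      rw [hc]; field_simp
    rw [(hecomm v).mul_pow, hpow, hnc, htexp, hmulexp, neg_add_cancel, zero_smul, exp_zero]
  · intro x
    have h1 : exp (c • t) * star (exp (c • t)) = 1 := by
      rw [hstar, hmulexp, add_neg_cancel, zero_smul, exp_zero]
    calc exp (c • t) * v * x * star (exp (c • t) * v)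
        = exp (c • t) * (v * x * star v) * star (exp (c • t)) := by
          rw [star_mul]; noncomm_ring
      _ = v * x * star v * (exp (c • t) * star (exp (c • t))) := by
          rw [(hecomm (v * x * star v)).eq]; noncomm_ring
      _ = v * x * star v := by rw [h1, mul_one]
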